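/- arXiv:2110.12314 — 6 statements merged into one kernel-verified Lean document; each statement's English description precedes it below -/
import Mathlib

section
/- Let F be a finite semifield. For any x₁, y₁, x₂, y₂ ∈ F with x₁ ≠ x₂, there exist a, b ∈ F with y₁ = a·x₁ + b and y₂ = a·x₂ + b. -/
/-- In a finite semifield `F`, for any `x₁ ≠ x₂` and any `y₁, y₂`, there is a
"line" `y = a·x + b` through `(x₁, y₁)` and `(x₂, y₂)`. -/
theorem stmt_7 {F : Type*} [Fintype F] [AddCommGroup F]
    (mul : F → F → F) (one : F) (hone : one ≠ 0)
    (hone_l : ∀ a : F, mul one a = a) (hone_r : ∀ a : F, mul a one = a)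
    (hldist : ∀ a b c : F, mul a (b + c) = mul a b + mul a c)
    (hrdist : ∀ a b c : F, mul (a + b) c = mul a c + mul b c)
    (hsolve_l : ∀ a b : F, a ≠ 0 → ∃! x : F, mul a x = b)
    (hsolve_r : ∀ a b : F, a ≠ 0 → ∃! y : F, mul y a = b) :
    ∀ x₁ y₁ x₂ y₂ : F, x₁ ≠ x₂ →
      ∃ a b : F, y₁ = mul a x₁ + b ∧ y₂ = mul a x₂ + b := by
  intro x₁ y₁ x₂ y₂ hne
  have hz : ∀ a : F, mul a 0 = 0 := by
    intro a
    have := hldist a 0 0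
    simpa using this.symm
  have hneg : ∀ a c : F, mul a (-c) = -(mul a c) := by
    intro a c
    have h := hldist a c (-c)
    rw [add_neg_cancel, hz] at h
    exact (neg_eq_of_add_eq_zero_right h.symm).symm
  have hx : x₁ - x₂ ≠ 0 := sub_ne_zero.mpr hne
  obtain ⟨a, ha, -⟩ := hsolve_r (x₁ - x₂) (y₁ - y₂) hx
  refine ⟨a, y₁ - mul a x₁, by abel, ?_⟩
  have : mul a x₁ - mul a x₂ = y₁ - y₂ := by
    rw [← ha, sub_eq_add_neg x₁, hldist, hneg, sub_eq_add_neg]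
  refine eq_add_of_sub_eq ?_
  rw [eq_add_of_sub_eq this]
  abel
end

section
/- Let F ⊆ A_n be a finite set containing 0 such that ‖x - y‖₁ = 2 for all distinct x, y ∈ F. Then either every nonzero element of F equals eᵢ - eⱼ for a common j (varying i), or every nonzero element equals eᵢ - eⱼ for a common i (varying j). Consequently, every such clique has size at most n + 1. -/
lemma sum_eq_one_aux {m : ℕ} (f : Fin m → ℤ) (hf : ∀ i, 0 ≤ f i)
    (h : ∑ i, f i = 1) : ∃ i, f i = 1 ∧ ∀ k, k ≠ i → f k = 0 := by
  obtain ⟨i, -, hi⟩ := Finset.exists_ne_zero_of_sum_ne_zero (by rw [h]; norm_num)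
  have hsplit : f i + ∑ k ∈ Finset.univ.erase i, f k = 1 := by
    rw [Finset.add_sum_erase _ _ (Finset.mem_univ i)]; exact h
  have hnn : 0 ≤ ∑ k ∈ Finset.univ.erase i, f k :=
    Finset.sum_nonneg (fun k _ => hf k)
  have hfi1 : f i = 1 := by have := hf i; omega
  have hz : ∑ k ∈ Finset.univ.erase i, f k = 0 := by omega
  refine ⟨i, hfi1, fun k hk => ?_⟩
  exact (Finset.sum_eq_zero_iff_of_nonneg (fun k _ => hf k)).mp hz k
    (Finset.mem_erase.mpr ⟨hk, Finset.mem_univ k⟩)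

lemma decomp {m : ℕ} (x : Fin (m + 1) → ℤ) (h0 : ∑ i, x i = 0)
    (h2 : ∑ i, |x i| = 2) :
    ∃ i j, i ≠ j ∧ x = Pi.single i 1 - Pi.single j 1 := by
  have habs : ∀ a : ℤ, |a| = max a 0 + max (-a) 0 := by
    intro a; rw [abs_eq_max_neg]; omega
  have hPN : ∑ i, (max (x i) 0 + max (-(x i)) 0) = 2 := by
    rw [← h2]; exact Finset.sum_congr rfl (fun i _ => (habs (x i)).symm)
  have hsub : ∑ i, (max (x i) 0 - max (-(x i)) 0) = 0 := by
    rw [← h0]; exact Finset.sum_congr rfl (fun i _ => by omega)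
  rw [Finset.sum_add_distrib] at hPN
  rw [Finset.sum_sub_distrib] at hsub
  have hP : ∑ i, max (x i) 0 = 1 := by omega
  have hN : ∑ i, max (-(x i)) 0 = 1 := by omega
  obtain ⟨i, hi1, hi0⟩ := sum_eq_one_aux _ (fun i => le_max_right _ _) hP
  obtain ⟨j, hj1, hj0⟩ := sum_eq_one_aux _ (fun i => le_max_right _ _) hN
  have hij : i ≠ j := by rintro rfl; omega
  refine ⟨i, j, hij, funext fun k => ?_⟩
  simp only [Pi.sub_apply, Pi.single_apply]
  by_cases hki : k = i
  · subst hki; have h2' := hj0 _ hij; split_ifs <;> omega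
  · have h1' := hi0 k hki
    by_cases hkj : k = j
    · subst hkj; split_ifs <;> omega
    · have h2' := hj0 k hkj; split_ifs <;> omega

lemma idx_aux {m : ℕ} {a b c d p q : Fin (m + 1)} (hab : a ≠ b) (hcd : c ≠ d)
    (hac : a ≠ c) (hbd : b ≠ d)
    (h : ((Pi.single a 1 : Fin (m+1) → ℤ) - Pi.single b 1) -
        ((Pi.single c 1 : Fin (m+1) → ℤ) - Pi.single d 1) =
      (Pi.single p 1 : Fin (m+1) → ℤ) - Pi.single q 1) : False := by
  have ha := congrFun h a
  have hb := congrFun h b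
  have hd := congrFun h d
  simp only [Pi.sub_apply, Pi.single_apply, if_pos rfl, if_neg hab, if_neg hac,
    if_neg hbd, if_neg (Ne.symm hab), if_neg hcd, if_neg (Ne.symm hcd),
    if_neg (Ne.symm hbd), if_neg (Ne.symm hac)] at ha hb hd
  by_cases had : a = d
  · rw [if_pos had] at ha
    split_ifs at ha <;> omega
  · by_cases hbc : b = c
    · rw [if_pos hbc] at hb
      split_ifs at hb <;> omega
    · rw [if_neg had] at ha
      rw [if_neg (fun hh : d = a => had hh.symm)] at hd
      split_ifs at ha hd <;> omega

lemma card_aux {n : ℕ} (F : Finset (Fin (n + 1) → ℤ)) (g : Fin (n + 1) → (Fin (n + 1) → ℤ))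
    (h : ∀ x ∈ F, ∃ i, x = g i) : F.card ≤ n + 1 := by
  classical
  have hsub : F ⊆ Finset.univ.image g := by
    intro x hx
    obtain ⟨i, hi⟩ := h x hx
    exact Finset.mem_image.mpr ⟨i, Finset.mem_univ i, hi.symm⟩
  calc F.card ≤ (Finset.univ.image g).card := Finset.card_le_card hsub
    _ ≤ (Finset.univ : Finset (Fin (n + 1))).card := Finset.card_image_le
    _ = n + 1 := by simp

/-- Cliques (in the `ℓ¹`-distance-2 graph) in `Aₙ` containing `0` consist of
vectors `eᵢ - eⱼ` with a common `j` or with a common `i`; hence they have at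
most `n + 1` elements. -/
theorem stmt_10 (n : ℕ) (F : Finset (Fin (n + 1) → ℤ))
    (hF : ∀ x ∈ F, ∑ i, x i = 0) (h0 : (0 : Fin (n + 1) → ℤ) ∈ F)
    (hclique : ∀ x ∈ F, ∀ y ∈ F, x ≠ y → ∑ i, |x i - y i| = 2) :
    ((∃ j : Fin (n + 1), ∀ x ∈ F, x ≠ 0 →
        ∃ i : Fin (n + 1), x = Pi.single i (1 : ℤ) - Pi.single j 1) ∨
      (∃ i : Fin (n + 1), ∀ x ∈ F, x ≠ 0 →
        ∃ j : Fin (n + 1), x = Pi.single i (1 : ℤ) - Pi.single j 1)) ∧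
    F.card ≤ n + 1 := by
  classical
  have hdec : ∀ x ∈ F, x ≠ 0 → ∃ i j, i ≠ j ∧ x = Pi.single i 1 - Pi.single j 1 := by
    intro x hx hx0
    apply decomp x (hF x hx)
    have := hclique x hx 0 h0 hx0
    simpa using this
  choose! I J hIJne hrep using hdec
  have hshare : ∀ x ∈ F, x ≠ 0 → ∀ y ∈ F, y ≠ 0 → x ≠ y → I x = I y ∨ J x = J y := by
    intro x hx hx0 y hy hy0 hxy
    by_contra hcon
    push_neg at hcon
    have hsum : ∑ i, (x i - y i) = 0 := by
      rw [Finset.sum_sub_distrib, hF x hx, hF y hy]; ring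
    obtain ⟨p, q, hpq, hpqe⟩ := decomp (x - y) (by simpa using hsum)
      (by simpa using hclique x hx y hy hxy)
    refine idx_aux (p := p) (q := q) (hIJne x hx hx0) (hIJne y hy hy0) hcon.1 hcon.2 ?_
    rw [← hrep x hx hx0, ← hrep y hy hy0, hpqe]
  have main : (∃ j : Fin (n + 1), ∀ x ∈ F, x ≠ 0 →
      ∃ i : Fin (n + 1), x = Pi.single i (1 : ℤ) - Pi.single j 1) ∨
    (∃ i : Fin (n + 1), ∀ x ∈ F, x ≠ 0 →
      ∃ j : Fin (n + 1), x = Pi.single i (1 : ℤ) - Pi.single j 1) := by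
    by_cases hex : ∃ x ∈ F, x ≠ 0
    · obtain ⟨x₀, hx₀, hx₀0⟩ := hex
      by_cases hj : ∀ x ∈ F, x ≠ 0 → J x = J x₀
      · left
        refine ⟨J x₀, fun x hx hx0 => ⟨I x, ?_⟩⟩
        have h' := hrep x hx hx0
        rw [hj x hx hx0] at h'
        exact h'
      · right
        push_neg at hj
        obtain ⟨y, hy, hy0, hyJ⟩ := hj
        have hyx : y ≠ x₀ := fun h => hyJ (by rw [h])
        have hIyx : I y = I x₀ := by
          rcases hshare y hy hy0 x₀ hx₀ hx₀0 hyx with h | h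
          · exact h
          · exact absurd h hyJ
        refine ⟨I x₀, fun z hz hz0 => ⟨J z, ?_⟩⟩
        have hIz : I z = I x₀ := by
          by_cases hzx : z = x₀
          · rw [hzx]
          · by_cases hzy : z = y
            · rw [hzy]; exact hIyx
            · rcases hshare z hz hz0 x₀ hx₀ hx₀0 hzx with h | h
              · exact h
              · rcases hshare z hz hz0 y hy hy0 hzy with h' | h'
                · rw [h', hIyx]
                · exact absurd (h'.symm.trans h) hyJ
        have h' := hrep z hz hz0
        rw [hIz] at h'
        exact h'
    · left
      push_neg at hex
      exact ⟨0, fun x hx hx0 => absurd (hex x hx) hx0⟩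
  refine ⟨main, ?_⟩
  rcases main with ⟨j, hj⟩ | ⟨i, hi⟩
  · refine card_aux F (fun i => Pi.single i 1 - Pi.single j 1) (fun x hx => ?_)
    by_cases hx0 : x = 0
    · exact ⟨j, by rw [hx0]; simp⟩
    · exact hj x hx hx0
  · refine card_aux F (fun j => Pi.single i 1 - Pi.single j 1) (fun x hx => ?_)
    by_cases hx0 : x = 0
    · exact ⟨i, by rw [hx0]; simp⟩
    · exact hi x hx hx0
end

section
/- Every maximal clique of size ≥ 3 in the graph on A_n with edges between points at ℓ¹-distance 2 is either {x + eᵢ : i ∈ [n+1]} for a unique x with coordinate sum -1, or {x - eᵢ : i ∈ [n+1]} for a unique x with coordinate sum 1; in particular, any 3-element clique is contained in a unique maximal clique of size n+1. -/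
/-- The `i`-th standard basis vector of `ℤ^{n+1}`. -/
def stdE (n : ℕ) (i : Fin (n + 1)) : Fin (n + 1) → ℤ := Pi.single i 1

/-- The lattice `Aₙ` as a set: integer vectors with coordinate sum zero. -/
def latticeASet (n : ℕ) : Set (Fin (n + 1) → ℤ) := {x | ∑ i, x i = 0}

/-- `S` is a clique in the graph on `Aₙ` with edges between points at
`ℓ¹`-distance `2`. -/
def IsCliqueA (n : ℕ) (S : Set (Fin (n + 1) → ℤ)) : Prop :=
  S ⊆ latticeASet n ∧ ∀ x ∈ S, ∀ y ∈ S, x ≠ y → ∑ i, |x i - y i| = 2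

/-- `S` is a maximal clique in this graph. -/
def IsMaxCliqueA (n : ℕ) (S : Set (Fin (n + 1) → ℤ)) : Prop :=
  IsCliqueA n S ∧ ∀ T, IsCliqueA n T → S ⊆ T → T = S

namespace A12
variable {n : ℕ}

lemma stdE_apply (i k : Fin (n+1)) : stdE n i k = if k = i then 1 else 0 :=
  Pi.single_apply i 1 k

lemma sum_stdE (i : Fin (n+1)) : ∑ k, stdE n i k = 1 := by
  simp [stdE, Finset.sum_pi_single']

lemma singleInj {a b : Fin (n+1)} (h : stdE n a = stdE n b) : a = b := by
  by_contra hab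
  have := congrFun h a
  simp [stdE_apply, hab] at this

lemma pairEq {a b c d : Fin (n+1)} (h : stdE n a + stdE n b = stdE n c + stdE n d) :
    (a = c ∧ b = d) ∨ (a = d ∧ b = c) := by
  by_cases hac : a = c
  · subst hac
    exact Or.inl ⟨rfl, singleInj (by linear_combination h)⟩
  by_cases had : a = d
  · subst had
    exact Or.inr ⟨rfl, singleInj (by linear_combination h)⟩
  · exfalso
    have h2 := congrFun h a
    simp [stdE_apply, hac, had] at h2
    split_ifs at h2 <;> omega

lemma quad {a b c d : Fin (n+1)} (h : stdE n a - stdE n b = stdE n c - stdE n d)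
    (hab : a ≠ b) : a = c ∧ b = d := by
  have h2 : stdE n a + stdE n d = stdE n c + stdE n b := by linear_combination h
  rcases pairEq h2 with ⟨h1, h2'⟩ | ⟨h1, h2'⟩
  · exact ⟨h1, h2'.symm⟩
  · exact absurd h1 hab

lemma key3 {a b c d e f : Fin (n+1)}
    (h : stdE n a + stdE n b + stdE n c = stdE n d + stdE n e + stdE n f)
    (h1 : d ≠ b) (h2 : e ≠ b) : f = b := by
  by_contra hf
  have hb := congrFun h b
  simp [stdE_apply, Ne.symm h1, Ne.symm h2, Ne.symm (hf : f ≠ b)] at hb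
  split_ifs at hb <;> omega

lemma edge {x y : Fin (n+1) → ℤ} (hx : ∑ i, x i = 0) (hy : ∑ i, y i = 0)
    (hd : ∑ i, |x i - y i| = 2) : ∃ i j, i ≠ j ∧ x = y + stdE n i - stdE n j := by
  have hsum : ∑ k, (x k - y k) = 0 := by rw [Finset.sum_sub_distrib, hx, hy]; ring
  have hpos : ∃ i, 0 < x i - y i := by
    by_contra hcon
    push_neg at hcon
    have h2 : ∑ k, |x k - y k| = ∑ k, -(x k - y k) :=
      Finset.sum_congr rfl fun k _ => abs_of_nonpos (hcon k)
    rw [Finset.sum_neg_distrib, hsum] at h2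
    omega
  have hneg : ∃ j, x j - y j < 0 := by
    by_contra hcon
    push_neg at hcon
    have h2 : ∑ k, |x k - y k| = ∑ k, (x k - y k) :=
      Finset.sum_congr rfl fun k _ => abs_of_nonneg (hcon k)
    rw [hsum] at h2
    omega
  obtain ⟨i, hi⟩ := hpos
  obtain ⟨j, hj⟩ := hneg
  have hij : i ≠ j := by intro h; rw [h] at hi; omega
  have e1 : ∑ k, |x k - y k| = |x i - y i| + ∑ k ∈ Finset.univ.erase i, |x k - y k| :=
    (Finset.add_sum_erase _ _ (Finset.mem_univ i)).symm
  have hjmem : j ∈ Finset.univ.erase i := Finset.mem_erase.2 ⟨Ne.symm hij, Finset.mem_univ j⟩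
  have e2 : ∑ k ∈ Finset.univ.erase i, |x k - y k|
      = |x j - y j| + ∑ k ∈ (Finset.univ.erase i).erase j, |x k - y k| :=
    (Finset.add_sum_erase _ _ hjmem).symm
  have hai : |x i - y i| = x i - y i := abs_of_pos hi
  have haj : |x j - y j| = -(x j - y j) := abs_of_neg hj
  have hnn : ∀ k ∈ (Finset.univ.erase i).erase j, (0:ℤ) ≤ |x k - y k| := fun k _ => abs_nonneg _
  have hrnn : 0 ≤ ∑ k ∈ (Finset.univ.erase i).erase j, |x k - y k| := Finset.sum_nonneg hnn
  have key : |x i - y i| + (|x j - y j| + ∑ k ∈ (Finset.univ.erase i).erase j, |x k - y k|) = 2 := by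
    rw [← e2, ← e1]; exact hd
  have hr0 : ∑ k ∈ (Finset.univ.erase i).erase j, |x k - y k| = 0 := by
    have h1 : ∑ k ∈ (Finset.univ.erase i).erase j, |x k - y k| ≤ 0 := by linarith
    linarith
  have hdi : x i - y i = 1 := by rw [hr0] at key; linarith
  have hdj : x j - y j = -1 := by rw [hr0] at key; linarith
  have hrest : ∀ k, k ≠ i → k ≠ j → x k = y k := by
    intro k hki hkj
    have hk : k ∈ (Finset.univ.erase i).erase j :=
      Finset.mem_erase.2 ⟨hkj, Finset.mem_erase.2 ⟨hki, Finset.mem_univ k⟩⟩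
    have h0 := (Finset.sum_eq_zero_iff_of_nonneg hnn).1 hr0 k hk
    have := abs_eq_zero.1 h0
    omega
  refine ⟨i, j, hij, ?_⟩
  funext k
  by_cases hki : k = i
  · subst hki
    simp [stdE_apply, Ne.symm hij]
    omega
  by_cases hkj : k = j
  · subst hkj
    simp [stdE_apply, hki]
    omega
  · have := hrest k hki hkj
    simp [stdE_apply, hki, hkj]
    omega

/-- The plus-type maximal clique. -/
def plusSet (n : ℕ) (x : Fin (n+1) → ℤ) : Set (Fin (n+1) → ℤ) :=
  {y | ∃ i : Fin (n+1), y = x + stdE n i}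

/-- The minus-type maximal clique. -/
def minusSet (n : ℕ) (x : Fin (n+1) → ℤ) : Set (Fin (n+1) → ℤ) :=
  {y | ∃ i : Fin (n+1), y = x - stdE n i}

lemma sum_abs_pair {i j : Fin (n+1)} (hij : i ≠ j) :
    ∑ k, |stdE n i k - stdE n j k| = 2 := by
  have hk : ∀ k, |stdE n i k - stdE n j k|
      = (if k = i then 1 else 0) + (if k = j then 1 else 0) := by
    intro k
    rw [stdE_apply, stdE_apply]
    by_cases h1 : k = i
    · rw [if_pos h1, if_neg (fun h2 => hij (h1.symm.trans h2))]
      norm_num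
    by_cases h2 : k = j
    · rw [if_pos h2, if_neg h1]
      norm_num
    · rw [if_neg h1, if_neg h2]
      norm_num
  rw [Finset.sum_congr rfl (fun k _ => hk k), Finset.sum_add_distrib]
  simp [Finset.sum_ite_eq']

lemma plus_clique {x : Fin (n+1) → ℤ} (hx : ∑ i, x i = -1) : IsCliqueA n (plusSet n x) := by
  constructor
  · rintro y ⟨i, rfl⟩
    show ∑ k, (x + stdE n i) k = 0
    simp only [Pi.add_apply]
    rw [Finset.sum_add_distrib, hx, sum_stdE]
    ring
  · rintro y ⟨i, rfl⟩ z ⟨j, rfl⟩ hyz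
    have hij : i ≠ j := by rintro rfl; exact hyz rfl
    have hk : ∀ k, |(x + stdE n i) k - (x + stdE n j) k| = |stdE n i k - stdE n j k| := by
      intro k
      simp only [Pi.add_apply]
      congr 1
      ring
    rw [Finset.sum_congr rfl (fun k _ => hk k)]
    exact sum_abs_pair hij

lemma minus_clique {x : Fin (n+1) → ℤ} (hx : ∑ i, x i = 1) : IsCliqueA n (minusSet n x) := by
  constructor
  · rintro y ⟨i, rfl⟩
    show ∑ k, (x - stdE n i) k = 0
    simp only [Pi.sub_apply]
    rw [Finset.sum_sub_distrib, hx, sum_stdE]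
    ring
  · rintro y ⟨i, rfl⟩ z ⟨j, rfl⟩ hyz
    have hij : j ≠ i := by rintro rfl; exact hyz rfl
    have hk : ∀ k, |(x - stdE n i) k - (x - stdE n j) k| = |stdE n j k - stdE n i k| := by
      intro k
      simp only [Pi.sub_apply]
      congr 1
      ring
    rw [Finset.sum_congr rfl (fun k _ => hk k)]
    exact sum_abs_pair hij

lemma plus_ncard (x : Fin (n+1) → ℤ) : (plusSet n x).ncard = n + 1 := by
  have himg : plusSet n x = (fun i : Fin (n+1) => x + stdE n i) '' Set.univ := by
    ext y
    constructor
    · rintro ⟨i, rfl⟩; exact ⟨i, Set.mem_univ i, rfl⟩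
    · rintro ⟨i, -, rfl⟩; exact ⟨i, rfl⟩
  rw [himg, Set.ncard_image_of_injective _ (fun i j h => singleInj (by linear_combination h)),
    Set.ncard_univ, Nat.card_eq_fintype_card, Fintype.card_fin]

lemma minus_ncard (x : Fin (n+1) → ℤ) : (minusSet n x).ncard = n + 1 := by
  have himg : minusSet n x = (fun i : Fin (n+1) => x - stdE n i) '' Set.univ := by
    ext y
    constructor
    · rintro ⟨i, rfl⟩; exact ⟨i, Set.mem_univ i, rfl⟩
    · rintro ⟨i, -, rfl⟩; exact ⟨i, rfl⟩
  rw [himg, Set.ncard_image_of_injective _ (fun i j h => singleInj (by linear_combination -h)),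
    Set.ncard_univ, Nat.card_eq_fintype_card, Fintype.card_fin]

lemma subset_plus {S : Set (Fin (n+1) → ℤ)} (hS : IsCliqueA n S) {x : Fin (n+1) → ℤ}
    {i j l : Fin (n+1)} (hij : i ≠ j) (hil : i ≠ l) (hjl : j ≠ l)
    (ha : x + stdE n i ∈ S) (hb : x + stdE n j ∈ S) (hc : x + stdE n l ∈ S) :
    S ⊆ plusSet n x := by
  intro d hd
  by_cases hdi : d = x + stdE n i
  · exact ⟨i, hdi⟩
  by_cases hdj : d = x + stdE n j
  · exact ⟨j, hdj⟩
  by_cases hdl : d = x + stdE n l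
  · exact ⟨l, hdl⟩
  obtain ⟨p, q, hpq, h1⟩ := edge (hS.1 hd) (hS.1 ha) (hS.2 d hd _ ha hdi)
  obtain ⟨r, s, hrs, h2⟩ := edge (hS.1 hd) (hS.1 hb) (hS.2 d hd _ hb hdj)
  obtain ⟨u, t, hut, h3⟩ := edge (hS.1 hd) (hS.1 hc) (hS.2 d hd _ hc hdl)
  by_cases hqi : q = i
  · subst hqi; exact ⟨p, by rw [h1]; ring⟩
  exfalso
  have E1 : stdE n r + stdE n q + stdE n j = stdE n p + stdE n i + stdE n s := by
    linear_combination h1 - h2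
  have hsq : s = q := key3 E1 hpq (fun h => hqi h.symm)
  subst hsq
  have P1 : stdE n r + stdE n j = stdE n p + stdE n i := by linear_combination E1
  have hpj : p = j := by
    rcases pairEq P1 with ⟨h', h''⟩ | ⟨h', h''⟩
    · exact absurd h''.symm hij
    · exact h''.symm
  have E2 : stdE n u + stdE n s + stdE n l = stdE n p + stdE n i + stdE n t := by
    linear_combination h1 - h3
  have htq : t = s := key3 E2 hpq (fun h => hqi h.symm)
  subst htq
  have P2 : stdE n u + stdE n l = stdE n p + stdE n i := by linear_combination E2
  have hpl : p = l := by
    rcases pairEq P2 with ⟨h', h''⟩ | ⟨h', h''⟩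
    · exact absurd h''.symm hil
    · exact h''.symm
  exact hjl (hpj.symm.trans hpl)

lemma subset_minus {S : Set (Fin (n+1) → ℤ)} (hS : IsCliqueA n S) {x : Fin (n+1) → ℤ}
    {i j l : Fin (n+1)} (hij : i ≠ j) (hil : i ≠ l) (hjl : j ≠ l)
    (ha : x - stdE n i ∈ S) (hb : x - stdE n j ∈ S) (hc : x - stdE n l ∈ S) :
    S ⊆ minusSet n x := by
  intro d hd
  by_cases hdi : d = x - stdE n i
  · exact ⟨i, hdi⟩
  by_cases hdj : d = x - stdE n j
  · exact ⟨j, hdj⟩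
  by_cases hdl : d = x - stdE n l
  · exact ⟨l, hdl⟩
  obtain ⟨p, q, hpq, h1⟩ := edge (hS.1 hd) (hS.1 ha) (hS.2 d hd _ ha hdi)
  obtain ⟨r, s, hrs, h2⟩ := edge (hS.1 hd) (hS.1 hb) (hS.2 d hd _ hb hdj)
  obtain ⟨u, t, hut, h3⟩ := edge (hS.1 hd) (hS.1 hc) (hS.2 d hd _ hc hdl)
  by_cases hpi : p = i
  · subst hpi; exact ⟨q, by rw [h1]; ring⟩
  exfalso
  -- d = x - e i + e p - e q = x - e j + e r - e s
  -- e j + e p + e s = e q + e i + e r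
  have E1 : stdE n j + stdE n p + stdE n s = stdE n q + stdE n i + stdE n r := by
    linear_combination h2 - h1
  have hrp : r = p := key3 E1 (fun h => hpq h.symm) (fun h => hpi h.symm)
  subst hrp
  have P1 : stdE n j + stdE n s = stdE n q + stdE n i := by linear_combination E1
  have hqj : q = j := by
    rcases pairEq P1 with ⟨h', h''⟩ | ⟨h', h''⟩
    · exact h'.symm
    · exact absurd h' (Ne.symm hij)
  have E2 : stdE n l + stdE n r + stdE n t = stdE n q + stdE n i + stdE n u := by
    linear_combination h3 - h1
  have hur : u = r := key3 E2 (fun h => hpq h.symm) (fun h => hpi h.symm)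
  subst hur
  have P2 : stdE n l + stdE n t = stdE n q + stdE n i := by linear_combination E2
  have hql : q = l := by
    rcases pairEq P2 with ⟨h', h''⟩ | ⟨h', h''⟩
    · exact h'.symm
    · exact absurd h'.symm hil
  exact hjl (hqj.symm.trans hql)

lemma classify {S : Set (Fin (n+1) → ℤ)} (hS : IsCliqueA n S) {a b c : Fin (n+1) → ℤ}
    (haS : a ∈ S) (hbS : b ∈ S) (hcS : c ∈ S)
    (hab : a ≠ b) (hac : a ≠ c) (hbc : b ≠ c) :
    (∃ x, ∑ i, x i = -1 ∧ S ⊆ plusSet n x) ∨ (∃ x, ∑ i, x i = 1 ∧ S ⊆ minusSet n x) := by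
  obtain ⟨i, j, hij, h1⟩ := edge (hS.1 haS) (hS.1 hbS) (hS.2 a haS b hbS hab)
  obtain ⟨k, l, hkl, h2⟩ := edge (hS.1 haS) (hS.1 hcS) (hS.2 a haS c hcS hac)
  obtain ⟨p, q, hpq, h3⟩ := edge (hS.1 hbS) (hS.1 hcS) (hS.2 b hbS c hcS hbc)
  by_cases hjp : j = p
  · -- plus case
    subst hjp
    have hrel : stdE n k - stdE n l = stdE n i - stdE n q := by
      linear_combination h1 + h3 - h2
    have hiq : i ≠ q := by
      rintro rfl
      exact hkl (singleInj (by linear_combination hrel))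
    obtain ⟨hki, hlq⟩ := quad hrel hkl
    rw [hki, hlq] at h2
    left
    refine ⟨a - stdE n i, ?_, ?_⟩
    · have hsa : ∑ m, a m = 0 := hS.1 haS
      simp only [Pi.sub_apply]
      rw [Finset.sum_sub_distrib, hsa, sum_stdE]
      norm_num
    · have hax : a = (a - stdE n i) + stdE n i := by ring
      have hbx : b = (a - stdE n i) + stdE n j := by linear_combination -h1
      have hcx : c = (a - stdE n i) + stdE n q := by linear_combination -h2
      have hjq : j ≠ q := by rintro rfl; exact hbc (hbx.trans hcx.symm)
      exact subset_plus hS hij hiq hjq (hax ▸ haS) (hbx ▸ hbS) (hcx ▸ hcS)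
  by_cases hiq : i = q
  · -- minus case
    rw [← hiq] at h3
    have hrel : stdE n k - stdE n l = stdE n p - stdE n j := by
      linear_combination h1 + h3 - h2
    obtain ⟨hkp, hlj⟩ := quad hrel hkl
    rw [hkp, hlj] at h2
    right
    refine ⟨a + stdE n j, ?_, ?_⟩
    · have hsa : ∑ m, a m = 0 := hS.1 haS
      simp only [Pi.add_apply]
      rw [Finset.sum_add_distrib, hsa, sum_stdE]
      norm_num
    · have hax : a = (a + stdE n j) - stdE n j := by ring
      have hbx : b = (a + stdE n j) - stdE n i := by linear_combination -h1
      have hcx : c = (a + stdE n j) - stdE n p := by linear_combination -h2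
      have hji : j ≠ i := Ne.symm hij
      have hjp' : j ≠ p := hjp
      have hip : i ≠ p := by rintro rfl; exact hbc (hbx.trans hcx.symm)
      exact subset_minus hS hji hjp' hip (hax ▸ haS) (hbx ▸ hbS) (hcx ▸ hcS)
  · -- contradiction case
    exfalso
    have E3 : stdE n k + stdE n j + stdE n q = stdE n i + stdE n p + stdE n l := by
      linear_combination h1 + h3 - h2
    have hlj : l = j := key3 E3 hij (fun h => hjp h.symm)
    rw [hlj] at h2
    have hki : k ≠ i := by
      rintro rfl
      exact hbc (by linear_combination h2 - h1)
    have hrel3 : stdE n k - stdE n i = stdE n p - stdE n q := by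
      linear_combination h1 - h2 + h3
    obtain ⟨hkp, hiq'⟩ := quad hrel3 hki
    exact hiq hiq'

lemma plus_unique_of_two {x x' : Fin (n+1) → ℤ} {i j i' j' : Fin (n+1)} (hij : i ≠ j)
    (h1 : x + stdE n i = x' + stdE n i') (h2 : x + stdE n j = x' + stdE n j') : x = x' := by
  by_cases hii : i' = i
  · subst hii; exact add_right_cancel h1
  · exfalso
    have hd : stdE n i' - stdE n i = stdE n j' - stdE n j := by linear_combination h2 - h1
    have hjj : j' ≠ j := by
      rintro rfl
      exact hii (singleInj (by linear_combination hd))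
    obtain ⟨h3, h4⟩ := quad hd hii
    exact hij h4

lemma minus_unique_of_two {x x' : Fin (n+1) → ℤ} {i j i' j' : Fin (n+1)} (hij : i ≠ j)
    (h1 : x - stdE n i = x' - stdE n i') (h2 : x - stdE n j = x' - stdE n j') : x = x' := by
  by_cases hii : i' = i
  · subst hii; exact by linear_combination h1
  · exfalso
    have hd : stdE n i' - stdE n i = stdE n j' - stdE n j := by linear_combination h1 - h2
    obtain ⟨h3, h4⟩ := quad hd hii
    exact hij h4

lemma conflict {x y : Fin (n+1) → ℤ} {i j k p q r : Fin (n+1)}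
    (hij : i ≠ j) (hik : i ≠ k) (hjk : j ≠ k)
    (h1 : x + stdE n i = y - stdE n p) (h2 : x + stdE n j = y - stdE n q)
    (h3 : x + stdE n k = y - stdE n r) : False := by
  have e1 : stdE n i + stdE n p = stdE n j + stdE n q := by linear_combination h1 - h2
  have e2 : stdE n i + stdE n p = stdE n k + stdE n r := by linear_combination h1 - h3
  rcases pairEq e1 with ⟨hij', -⟩ | ⟨-, hpj⟩
  · exact hij hij'
  rcases pairEq e2 with ⟨hik', -⟩ | ⟨-, hpk⟩
  · exact hik hik'
  exact hjk (hpj.symm.trans hpk)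

end A12

open A12

/-- Every maximal clique of size `≥ 3` in the distance-2 graph on `Aₙ` is of
the form `{x + eᵢ}` for a unique `x` of coordinate sum `-1`, or `{x - eᵢ}` for
a unique `x` of coordinate sum `1`; and every 3-element clique is contained in
a unique maximal clique, which has `n + 1` elements. -/
theorem stmt_12 (n : ℕ) :
    (∀ S : Set (Fin (n + 1) → ℤ), IsMaxCliqueA n S → 3 ≤ S.ncard →
      (∃! x : Fin (n + 1) → ℤ, ∑ i, x i = -1 ∧
        S = {y | ∃ i : Fin (n + 1), y = x + stdE n i}) ∨
      (∃! x : Fin (n + 1) → ℤ, ∑ i, x i = 1 ∧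
        S = {y | ∃ i : Fin (n + 1), y = x - stdE n i})) ∧
    (∀ T : Set (Fin (n + 1) → ℤ), IsCliqueA n T → T.ncard = 3 →
      ∃! M : Set (Fin (n + 1) → ℤ),
        IsMaxCliqueA n M ∧ T ⊆ M ∧ M.ncard = n + 1) := by
  constructor
  · intro S hmax hcard
    obtain ⟨T, hTS, hT3⟩ := Set.exists_subset_card_eq hcard
    obtain ⟨a, b, c, hab, hac, hbc, hTeq⟩ := Set.ncard_eq_three.1 hT3
    have haS : a ∈ S := hTS (by rw [hTeq]; simp)
    have hbS : b ∈ S := hTS (by rw [hTeq]; simp)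
    have hcS : c ∈ S := hTS (by rw [hTeq]; simp)
    rcases classify hmax.1 haS hbS hcS hab hac hbc with ⟨x, hx, hsub⟩ | ⟨x, hx, hsub⟩
    · left
      have hSeq : plusSet n x = S := hmax.2 _ (plus_clique hx) hsub
      refine ⟨x, ⟨hx, hSeq.symm⟩, ?_⟩
      rintro x' ⟨hx', hSeq'⟩
      have hax : a ∈ plusSet n x := hSeq ▸ haS
      have hbx : b ∈ plusSet n x := hSeq ▸ hbS
      have hax' : a ∈ plusSet n x' := by have h := haS; rw [hSeq'] at h; exact h
      have hbx' : b ∈ plusSet n x' := by have h := hbS; rw [hSeq'] at h; exact h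
      obtain ⟨ia, hia⟩ := hax
      obtain ⟨ib, hib⟩ := hbx
      obtain ⟨ia', hia'⟩ := hax'
      obtain ⟨ib', hib'⟩ := hbx'
      have hne : ia' ≠ ib' := by rintro rfl; exact hab (hia'.trans hib'.symm)
      exact plus_unique_of_two hne (hia'.symm.trans hia) (hib'.symm.trans hib)
    · right
      have hSeq : minusSet n x = S := hmax.2 _ (minus_clique hx) hsub
      refine ⟨x, ⟨hx, hSeq.symm⟩, ?_⟩
      rintro x' ⟨hx', hSeq'⟩
      have hax : a ∈ minusSet n x := hSeq ▸ haS
      have hbx : b ∈ minusSet n x := hSeq ▸ hbS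
      have hax' : a ∈ minusSet n x' := by have h := haS; rw [hSeq'] at h; exact h
      have hbx' : b ∈ minusSet n x' := by have h := hbS; rw [hSeq'] at h; exact h
      obtain ⟨ia, hia⟩ := hax
      obtain ⟨ib, hib⟩ := hbx
      obtain ⟨ia', hia'⟩ := hax'
      obtain ⟨ib', hib'⟩ := hbx'
      have hne : ia' ≠ ib' := by rintro rfl; exact hab (hia'.trans hib'.symm)
      exact minus_unique_of_two hne (hia'.symm.trans hia) (hib'.symm.trans hib)
  · intro T hT hT3
    obtain ⟨a, b, c, hab, hac, hbc, hTeq⟩ := Set.ncard_eq_three.1 hT3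
    have haT : a ∈ T := by rw [hTeq]; simp
    have hbT : b ∈ T := by rw [hTeq]; simp
    have hcT : c ∈ T := by rw [hTeq]; simp
    rcases classify hT haT hbT hcT hab hac hbc with ⟨x, hx, hsub⟩ | ⟨x, hx, hsub⟩
    · -- plus case
      obtain ⟨ia, hia⟩ := hsub haT
      obtain ⟨ib, hib⟩ := hsub hbT
      obtain ⟨ic, hic⟩ := hsub hcT
      have hiab : ia ≠ ib := by rintro rfl; exact hab (hia.trans hib.symm)
      have hiac : ia ≠ ic := by rintro rfl; exact hac (hia.trans hic.symm)
      have hibc : ib ≠ ic := by rintro rfl; exact hbc (hib.trans hic.symm)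
      have hclique := plus_clique hx
      have hmaxM : ∀ T', IsCliqueA n T' → plusSet n x ⊆ T' → T' = plusSet n x := by
        intro T' hT' hsubT'
        have haT' : a ∈ T' := hsubT' ⟨ia, hia⟩
        have hbT' : b ∈ T' := hsubT' ⟨ib, hib⟩
        have hcT' : c ∈ T' := hsubT' ⟨ic, hic⟩
        rcases classify hT' haT' hbT' hcT' hab hac hbc with ⟨x', hx', hsub'⟩ | ⟨y', hy', hsub'⟩
        · obtain ⟨ja, hja⟩ := hsub' haT'
          obtain ⟨jb, hjb⟩ := hsub' hbT'
          have hjab : ja ≠ jb := by rintro rfl; exact hab (hja.trans hjb.symm)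
          have hxx : x' = x := plus_unique_of_two hjab (hja.symm.trans hia) (hjb.symm.trans hib)
          subst hxx
          exact Set.Subset.antisymm hsub' hsubT'
        · obtain ⟨pa, hpa⟩ := hsub' haT'
          obtain ⟨pb, hpb⟩ := hsub' hbT'
          obtain ⟨pc, hpc⟩ := hsub' hcT'
          exact absurd (conflict hiab hiac hibc (hia.symm.trans hpa) (hib.symm.trans hpb)
            (hic.symm.trans hpc)) (fun h => h)
      refine ⟨plusSet n x, ⟨⟨hclique, hmaxM⟩, hsub, plus_ncard x⟩, ?_⟩
      rintro M' ⟨⟨hM'c, hM'max⟩, hTM', hM'card⟩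
      have haM' : a ∈ M' := hTM' haT
      have hbM' : b ∈ M' := hTM' hbT
      have hcM' : c ∈ M' := hTM' hcT
      rcases classify hM'c haM' hbM' hcM' hab hac hbc with ⟨x', hx', hsub'⟩ | ⟨y', hy', hsub'⟩
      · obtain ⟨ja, hja⟩ := hsub' haM'
        obtain ⟨jb, hjb⟩ := hsub' hbM'
        have hjab : ja ≠ jb := by rintro rfl; exact hab (hja.trans hjb.symm)
        have hxx : x' = x := plus_unique_of_two hjab (hja.symm.trans hia) (hjb.symm.trans hib)
        subst hxx
        exact (hM'max (plusSet n x') (plus_clique hx) hsub').symm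
      · obtain ⟨pa, hpa⟩ := hsub' haM'
        obtain ⟨pb, hpb⟩ := hsub' hbM'
        obtain ⟨pc, hpc⟩ := hsub' hcM'
        exact absurd (conflict hiab hiac hibc (hia.symm.trans hpa) (hib.symm.trans hpb)
          (hic.symm.trans hpc)) (fun h => h)
    · -- minus case
      obtain ⟨ia, hia⟩ := hsub haT
      obtain ⟨ib, hib⟩ := hsub hbT
      obtain ⟨ic, hic⟩ := hsub hcT
      have hiab : ia ≠ ib := by rintro rfl; exact hab (hia.trans hib.symm)
      have hiac : ia ≠ ic := by rintro rfl; exact hac (hia.trans hic.symm)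
      have hibc : ib ≠ ic := by rintro rfl; exact hbc (hib.trans hic.symm)
      have hclique := minus_clique hx
      have hmaxM : ∀ T', IsCliqueA n T' → minusSet n x ⊆ T' → T' = minusSet n x := by
        intro T' hT' hsubT'
        have haT' : a ∈ T' := hsubT' ⟨ia, hia⟩
        have hbT' : b ∈ T' := hsubT' ⟨ib, hib⟩
        have hcT' : c ∈ T' := hsubT' ⟨ic, hic⟩
        rcases classify hT' haT' hbT' hcT' hab hac hbc with ⟨y', hy', hsub'⟩ | ⟨x', hx', hsub'⟩
        · obtain ⟨pa, hpa⟩ := hsub' haT'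
          obtain ⟨pb, hpb⟩ := hsub' hbT'
          obtain ⟨pc, hpc⟩ := hsub' hcT'
          have hpab : pa ≠ pb := by rintro rfl; exact hab (hpa.trans hpb.symm)
          have hpac : pa ≠ pc := by rintro rfl; exact hac (hpa.trans hpc.symm)
          have hpbc : pb ≠ pc := by rintro rfl; exact hbc (hpb.trans hpc.symm)
          exact absurd (conflict hpab hpac hpbc (hpa.symm.trans hia) (hpb.symm.trans hib)
            (hpc.symm.trans hic)) (fun h => h)
        · obtain ⟨ja, hja⟩ := hsub' haT'
          obtain ⟨jb, hjb⟩ := hsub' hbT'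
          have hjab : ja ≠ jb := by rintro rfl; exact hab (hja.trans hjb.symm)
          have hxx : x' = x := minus_unique_of_two hjab (hja.symm.trans hia) (hjb.symm.trans hib)
          subst hxx
          exact Set.Subset.antisymm hsub' hsubT'
      refine ⟨minusSet n x, ⟨⟨hclique, hmaxM⟩, hsub, minus_ncard x⟩, ?_⟩
      rintro M' ⟨⟨hM'c, hM'max⟩, hTM', hM'card⟩
      have haM' : a ∈ M' := hTM' haT
      have hbM' : b ∈ M' := hTM' hbT
      have hcM' : c ∈ M' := hTM' hcT
      rcases classify hM'c haM' hbM' hcM' hab hac hbc with ⟨y', hy', hsub'⟩ | ⟨x', hx', hsub'⟩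
      · obtain ⟨pa, hpa⟩ := hsub' haM'
        obtain ⟨pb, hpb⟩ := hsub' hbM'
        obtain ⟨pc, hpc⟩ := hsub' hcM'
        have hpab : pa ≠ pb := by rintro rfl; exact hab (hpa.trans hpb.symm)
        have hpac : pa ≠ pc := by rintro rfl; exact hac (hpa.trans hpc.symm)
        have hpbc : pb ≠ pc := by rintro rfl; exact hbc (hpb.trans hpc.symm)
        exact absurd (conflict hpab hpac hpbc (hpa.symm.trans hia) (hpb.symm.trans hib)
          (hpc.symm.trans hic)) (fun h => h)
      · obtain ⟨ja, hja⟩ := hsub' haM'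
        obtain ⟨jb, hjb⟩ := hsub' hbM'
        have hjab : ja ≠ jb := by rintro rfl; exact hab (hja.trans hjb.symm)
        have hxx : x' = x := minus_unique_of_two hjab (hja.symm.trans hia) (hjb.symm.trans hib)
        subst hxx
        exact (hM'max (minusSet n x') (minus_clique hx) hsub').symm
end

section
/- Let B = {0, b₁, …, b_k} be a Sidon set of order 2 in an abelian group G generating G. Then L = {x ∈ A_k : Σᵢ xᵢ bᵢ = 0} is a subgroup of A_k such that the balls of radius 1 (in the metric d(x,y) = ‖x-y‖₁/2) centered at elements of L are pairwise disjoint, and A_k / L ≅ G. -/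
lemma msum_count {n : ℕ} {G : Type*} [AddCommMonoid G] (b : Fin n → G) (M : Multiset (Fin n)) :
    (M.map b).sum = ∑ i, M.count i • b i := by
  rw [Finset.sum_multiset_map_count]
  refine Finset.sum_subset (Finset.subset_univ _) (fun i _ hi => ?_)
  simp [Multiset.count_eq_zero_of_notMem (by simpa using hi)]

lemma mcard_count {n : ℕ} (M : Multiset (Fin n)) : Multiset.card M = ∑ i, M.count i := by
  rw [← Multiset.toFinset_sum_count_eq]
  refine Finset.sum_subset (Finset.subset_univ _) (fun i _ hi => ?_)
  simp [Multiset.count_eq_zero_of_notMem (by simpa using hi)]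

lemma key {k : ℕ} {G : Type*} [AddCommGroup G] (b : Fin (k + 1) → G)
    (hbinj : Function.Injective b)
    (hsidon : ∀ i j i' j' : Fin (k + 1), i ≠ j → i' ≠ j' →
      b i - b j = b i' - b j' → i = i' ∧ j = j')
    (w : Fin (k + 1) → ℤ) (hw0 : w ≠ 0) (hsum : ∑ i, w i = 0)
    (habs : ∑ i, |w i| ≤ 4) (hker : ∑ i, w i • b i = 0) : False := by
  classical
  set P : Multiset (Fin (k + 1)) :=
    Finsupp.toMultiset (Finsupp.equivFunOnFinite.symm fun i => (w i).toNat) with hP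
  set N : Multiset (Fin (k + 1)) :=
    Finsupp.toMultiset (Finsupp.equivFunOnFinite.symm fun i => (-w i).toNat) with hN
  have hcP : ∀ i, P.count i = (w i).toNat := fun i => by
    simp [hP, Finsupp.count_toMultiset]
  have hcN : ∀ i, N.count i = (-w i).toNat := fun i => by
    simp [hN, Finsupp.count_toMultiset]
  have hcardP : Multiset.card P = ∑ i, (w i).toNat := by
    rw [mcard_count]; exact Finset.sum_congr rfl fun i _ => hcP i
  have hcardN : Multiset.card N = ∑ i, (-w i).toNat := by
    rw [mcard_count]; exact Finset.sum_congr rfl fun i _ => hcN i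
  have habs' : ∑ i, |w i| = ((∑ i, (w i).toNat : ℕ) : ℤ) + ((∑ i, (-w i).toNat : ℕ) : ℤ) := by
    push_cast
    rw [← Finset.sum_add_distrib]
    exact Finset.sum_congr rfl fun i _ => by
      rw [Int.abs_eq_natAbs]; omega
  have hsum' : ((∑ i, (w i).toNat : ℕ) : ℤ) - ((∑ i, (-w i).toNat : ℕ) : ℤ) = 0 := by
    push_cast
    rw [← Finset.sum_sub_distrib, ← hsum]
    exact Finset.sum_congr rfl fun i _ => by omega
  have hPN : Multiset.card P = Multiset.card N := by
    rw [hcardP, hcardN]; omega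
  have hle : Multiset.card P ≤ 2 := by
    rw [hcardP]; omega
  have hne : Multiset.card P ≠ 0 := by
    intro h
    apply hw0
    have hN0 : N = 0 := Multiset.card_eq_zero.mp (by omega)
    have hP0 : P = 0 := Multiset.card_eq_zero.mp h
    funext i
    have h1 : P.count i = 0 := by simp [hP0]
    have h2 : N.count i = 0 := by simp [hN0]
    rw [hcP] at h1; rw [hcN] at h2
    show w i = 0
    omega
  -- the sums over P and N of b agree
  have hbsum : (P.map b).sum = (N.map b).sum := by
    have : (P.map b).sum - (N.map b).sum = 0 := by
      rw [msum_count, msum_count, ← Finset.sum_sub_distrib, ← hker]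
      refine Finset.sum_congr rfl fun i _ => ?_
      rw [hcP, hcN, ← natCast_zsmul, ← natCast_zsmul, ← sub_smul]
      congr 1
      omega
    exact sub_eq_zero.mp this
  -- disjointness: positive and negative supports
  have hdisj : ∀ i, i ∈ P → i ∉ N := by
    intro i hiP hiN
    rw [← Multiset.count_pos, hcP] at hiP
    rw [← Multiset.count_pos, hcN] at hiN
    omega
  have hcases : Multiset.card P = 1 ∨ Multiset.card P = 2 := by omega
  rcases hcases with h | h
  · obtain ⟨i, hPi⟩ := Multiset.card_eq_one.mp h
    obtain ⟨j, hNj⟩ := Multiset.card_eq_one.mp (hPN ▸ h)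
    have hij : i ≠ j := by
      intro e
      exact hdisj i (hPi ▸ Multiset.mem_singleton_self i)
        (by rw [hNj, e]; exact Multiset.mem_singleton_self j)
    apply hij
    apply hbinj
    simpa [hPi, hNj] using hbsum
  · obtain ⟨i, i', hPi⟩ := Multiset.card_eq_two.mp h
    obtain ⟨j, j', hNj⟩ := Multiset.card_eq_two.mp (hPN ▸ h)
    have hiP : i ∈ P := by rw [hPi]; simp
    have hi'P : i' ∈ P := by rw [hPi]; simp
    have hjN : j ∈ N := by rw [hNj]; simp
    have hj'N : j' ∈ N := by rw [hNj]; simp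
    have hij : i ≠ j := fun e => hdisj i hiP (e ▸ hjN)
    have hij' : i ≠ j' := fun e => hdisj i hiP (e ▸ hj'N)
    have hi'j' : i' ≠ j' := fun e => hdisj i' hi'P (e ▸ hj'N)
    have heq : b i + b i' = b j + b j' := by
      simpa [hPi, hNj] using hbsum
    have := hsidon i j j' i' hij (Ne.symm hi'j') (by
      rw [sub_eq_sub_iff_add_eq_add, add_comm (b j')]
      exact heq)
    exact hij' this.1

/-- The lattice `Aₖ = {x ∈ ℤ^{k+1} : Σᵢ xᵢ = 0}`. -/
def latticeA (k : ℕ) : AddSubgroup (Fin (k + 1) → ℤ) :=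
  AddMonoidHom.ker
    (AddMonoidHom.mk' (fun x => ∑ i, x i)
      (by intro a b; simp [Finset.sum_add_distrib]))

/-- The homomorphism `Aₖ → G`, `x ↦ Σᵢ xᵢ bᵢ`. -/
def sidonHom (k : ℕ) {G : Type*} [AddCommGroup G] (b : Fin (k + 1) → G) :
    latticeA k →+ G :=
  AddMonoidHom.mk' (fun x => ∑ i, (x : Fin (k + 1) → ℤ) i • b i)
    (by
      intro x y
      rw [← Finset.sum_add_distrib]
      refine Finset.sum_congr rfl fun i _ => ?_
      simp [add_zsmul])

/-- From a generating Sidon set `B = {0, b₁, …, b_k}` of order 2 in `G`, the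
lattice `L = {x ∈ Aₖ : Σᵢ xᵢ bᵢ = 0}` is a linear code of radius 1 in `Aₖ`
(balls of radius 1 around its points are pairwise disjoint), with
`Aₖ / L ≅ G`. -/
theorem stmt_14 (k : ℕ) {G : Type*} [AddCommGroup G] (b : Fin (k + 1) → G)
    (hb0 : b 0 = 0) (hbinj : Function.Injective b)
    (hsidon : ∀ i j i' j' : Fin (k + 1), i ≠ j → i' ≠ j' →
      b i - b j = b i' - b j' → i = i' ∧ j = j')
    (hgen : AddSubgroup.closure (Set.range b) = ⊤) :
    (∀ x ∈ (sidonHom k b).ker, ∀ y ∈ (sidonHom k b).ker, x ≠ y →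
      ∀ z : latticeA k,
        ¬(∑ i, |(x : Fin (k + 1) → ℤ) i - (z : Fin (k + 1) → ℤ) i| ≤ 2 ∧
          ∑ i, |(y : Fin (k + 1) → ℤ) i - (z : Fin (k + 1) → ℤ) i| ≤ 2)) ∧
    Nonempty ((latticeA k ⧸ (sidonHom k b).ker) ≃+ G) := by
  constructor
  · rintro x hx y hy hxy z ⟨h1, h2⟩
    refine key b hbinj hsidon
      (fun i => (x : Fin (k + 1) → ℤ) i - (y : Fin (k + 1) → ℤ) i) ?_ ?_ ?_ ?_
    · intro h
      apply hxy
      apply Subtype.ext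
      funext i
      have := congrFun h i
      simp only [Pi.zero_apply] at this
      linarith
    · have hxs : ∑ i, (x : Fin (k + 1) → ℤ) i = 0 := x.2
      have hys : ∑ i, (y : Fin (k + 1) → ℤ) i = 0 := y.2
      rw [Finset.sum_sub_distrib, hxs, hys, sub_zero]
    · calc ∑ i, |(x : Fin (k + 1) → ℤ) i - (y : Fin (k + 1) → ℤ) i|
          ≤ ∑ i, (|(x : Fin (k + 1) → ℤ) i - (z : Fin (k + 1) → ℤ) i|
              + |(y : Fin (k + 1) → ℤ) i - (z : Fin (k + 1) → ℤ) i|) := by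
            refine Finset.sum_le_sum fun i _ => ?_
            have := abs_sub_le ((x : Fin (k + 1) → ℤ) i) ((z : Fin (k + 1) → ℤ) i)
              ((y : Fin (k + 1) → ℤ) i)
            rw [abs_sub_comm ((z : Fin (k + 1) → ℤ) i)] at this
            exact this
        _ = (∑ i, |(x : Fin (k + 1) → ℤ) i - (z : Fin (k + 1) → ℤ) i|)
            + ∑ i, |(y : Fin (k + 1) → ℤ) i - (z : Fin (k + 1) → ℤ) i| :=
            Finset.sum_add_distrib
        _ ≤ 2 + 2 := add_le_add h1 h2
        _ = 4 := by norm_num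
    · have hxk : ∑ i, (x : Fin (k + 1) → ℤ) i • b i = 0 := by
        simpa [sidonHom] using AddMonoidHom.mem_ker.mp hx
      have hyk : ∑ i, (y : Fin (k + 1) → ℤ) i • b i = 0 := by
        simpa [sidonHom] using AddMonoidHom.mem_ker.mp hy
      simp only [sub_smul]
      rw [Finset.sum_sub_distrib, hxk, hyk, sub_zero]
  · have hsurj : Function.Surjective (sidonHom k b) := by
      rw [← AddMonoidHom.range_eq_top, ← top_le_iff, ← hgen,
        AddSubgroup.closure_le]
      rintro g ⟨j, rfl⟩
      refine ⟨⟨fun l => (if l = j then 1 else 0) - (if l = 0 then 1 else 0), ?_⟩, ?_⟩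
      · simp [latticeA, AddMonoidHom.mem_ker, Finset.sum_sub_distrib, Finset.sum_ite_eq']
      · show ∑ l, ((if l = j then (1 : ℤ) else 0) - if l = 0 then 1 else 0) • b l = b j
        simp [sub_smul, Finset.sum_sub_distrib, ite_smul, Finset.sum_ite_eq', hb0]
    exact ⟨QuotientAddGroup.quotientKerEquivOfSurjective _ hsurj⟩
end

section
/- Let L ≤ A_k be a subgroup such that the vectors eᵢ - eⱼ (i ≠ j, i, j ∈ [k+1]) are pairwise distinct and nonzero modulo L. Then the images of e₁ - e_{k+1}, …, e_k - e_{k+1}, 0 in G = A_k / L form a Sidon set of order 2 of size k+1 generating G. -/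
/-- The element `eᵢ - eⱼ` of `Aₖ`. -/
def eij (k : ℕ) (i j : Fin (k + 1)) : latticeA k :=
  ⟨Pi.single i (1 : ℤ) - Pi.single j 1, by
    simp only [latticeA, AddMonoidHom.mem_ker, AddMonoidHom.mk'_apply,
      Pi.sub_apply]
    simp [Finset.sum_sub_distrib]⟩

lemma coe_zsmul' (k : ℕ) (n : ℤ) (a : latticeA k) :
    ((n • a : latticeA k) : Fin (k + 1) → ℤ) = n • (a : Fin (k + 1) → ℤ) := rfl

lemma eij_key (k : ℕ) (i j : Fin (k + 1)) :
    eij k i j = eij k i (Fin.last k) - eij k j (Fin.last k) := by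
  apply Subtype.ext
  simp only [eij, AddSubgroup.coe_sub]
  abel

lemma eij_self (k : ℕ) (i : Fin (k + 1)) : eij k i i = 0 := by
  apply Subtype.ext; simp [eij]

/-- If the vectors `eᵢ - eⱼ` (`i ≠ j`) are pairwise distinct and nonzero modulo
a subgroup `L ≤ Aₖ`, then the images of `e₁ - e_{k+1}, …, e_k - e_{k+1}, 0` in
`G = Aₖ / L` form a Sidon set of order 2 of size `k + 1` generating `G`. -/
theorem stmt_15 (k : ℕ) (L : AddSubgroup (latticeA k))
    (hdistinct : ∀ i j i' j' : Fin (k + 1), i ≠ j → i' ≠ j' →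
      QuotientAddGroup.mk' L (eij k i j) = QuotientAddGroup.mk' L (eij k i' j') →
      i = i' ∧ j = j')
    (hnonzero : ∀ i j : Fin (k + 1), i ≠ j →
      QuotientAddGroup.mk' L (eij k i j) ≠ 0) :
    Function.Injective
      (fun i : Fin (k + 1) => QuotientAddGroup.mk' L (eij k i (Fin.last k))) ∧
    (∀ i j i' j' : Fin (k + 1), i ≠ j → i' ≠ j' →
      QuotientAddGroup.mk' L (eij k i (Fin.last k)) -
          QuotientAddGroup.mk' L (eij k j (Fin.last k)) =
        QuotientAddGroup.mk' L (eij k i' (Fin.last k)) -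
          QuotientAddGroup.mk' L (eij k j' (Fin.last k)) →
      i = i' ∧ j = j') ∧
    AddSubgroup.closure
      (Set.range fun i : Fin (k + 1) =>
        QuotientAddGroup.mk' L (eij k i (Fin.last k))) = ⊤ := by
  refine ⟨?_, ?_, ?_⟩
  · intro i j h
    simp only at h
    by_cases hij : i = j
    · exact hij
    by_cases hi : i = Fin.last k
    · exfalso
      apply hnonzero j (Fin.last k) (fun hh => hij (hh ▸ hi.symm ▸ rfl))
      rw [← h, hi, eij_self, map_zero]
    by_cases hj : j = Fin.last k
    · exfalso
      apply hnonzero i (Fin.last k) hi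
      rw [h, hj, eij_self, map_zero]
    · exact (hdistinct i (Fin.last k) j (Fin.last k) hi hj h).1
  · intro i j i' j' hij hij' h
    apply hdistinct i j i' j' hij hij'
    rw [eij_key k i j, eij_key k i' j', map_sub, map_sub, h]
  · have hgen : AddSubgroup.closure
        (Set.range fun i : Fin (k + 1) => eij k i (Fin.last k)) =
        (⊤ : AddSubgroup (latticeA k)) := by
      rw [eq_top_iff]
      rintro x -
      have hx : x = ∑ i, (x : Fin (k + 1) → ℤ) i • eij k i (Fin.last k) := by
        apply Subtype.ext
        rw [AddSubgroup.val_finset_sum]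
        funext j
        simp only [coe_zsmul', Finset.sum_apply, eij, Pi.smul_apply,
          Pi.sub_apply, smul_eq_mul, mul_sub]
        rw [Finset.sum_sub_distrib]
        have hsum : ∑ i, (x : Fin (k + 1) → ℤ) i = 0 := x.2
        have h1 : ∑ i, (x : Fin (k + 1) → ℤ) i * (Pi.single i 1 : Fin (k + 1) → ℤ) j
            = (x : Fin (k + 1) → ℤ) j := by
          rw [Finset.sum_eq_single j]
          · simp
          · intro b _ hb
            simp [Pi.single_apply, hb]
          · simp
        have h2 : ∑ i, (x : Fin (k + 1) → ℤ) i * (Pi.single (Fin.last k) 1 : Fin (k + 1) → ℤ) j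
            = 0 := by
          by_cases hj : j = Fin.last k
          · subst hj; simpa using hsum
          · simp [Pi.single_apply, Ne.symm hj]
        rw [h1, h2, sub_zero]
      rw [hx]
      exact sum_mem fun i _ =>
        zsmul_mem (AddSubgroup.subset_closure (Set.mem_range_self i)) _
    have hr : (Set.range fun i : Fin (k + 1) =>
        QuotientAddGroup.mk' L (eij k i (Fin.last k))) =
        (QuotientAddGroup.mk' L) ''
          (Set.range fun i : Fin (k + 1) => eij k i (Fin.last k)) := by
      rw [← Set.range_comp]; rfl
    rw [hr, ← AddMonoidHom.map_closure, hgen]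
    exact AddSubgroup.map_top_of_surjective _ (QuotientAddGroup.mk'_surjective L)
end

section
/- Let L ≤ A_k be a subgroup such that closed balls of radius 1 (metric d(x,y)=‖x-y‖₁/2) around points of L are pairwise disjoint. Define an incidence structure on G = A_k / L: points and lines are elements of G, with p incident to l iff p - l ≡ eᵢ - e_{k+1} (mod L) for some i ∈ [k+1]. Then any two distinct points are incident with at most one common line. -/
/-- The incidence relation on `G = Aₖ / L`: point `p` and line `l` are
incident iff `p - l ≡ eᵢ - e_{k+1} (mod L)` for some `i`. -/
def Incid (k : ℕ) (L : AddSubgroup (latticeA k))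
    (p l : latticeA k ⧸ L) : Prop :=
  ∃ i : Fin (k + 1), p - l = QuotientAddGroup.mk' L (eij k i (Fin.last k))

lemma single_abs_sum (k : ℕ) (a : Fin (k + 1)) :
    ∑ i, |(Pi.single a 1 : Fin (k + 1) → ℤ) i| = 1 := by
  simp [Pi.single_apply, apply_ite (|·|)]

lemma pair_bound (k : ℕ) (a b : Fin (k + 1)) :
    ∑ i, |(Pi.single a 1 : Fin (k + 1) → ℤ) i - (Pi.single b 1 : Fin (k + 1) → ℤ) i| ≤ (2 : ℤ) := by
  calc ∑ i, |(Pi.single a 1 : Fin (k + 1) → ℤ) i - (Pi.single b 1 : Fin (k + 1) → ℤ) i|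
      ≤ ∑ i, (|(Pi.single a 1 : Fin (k + 1) → ℤ) i| + |(Pi.single b 1 : Fin (k + 1) → ℤ) i|) :=
        Finset.sum_le_sum fun i _ => abs_sub _ _
    _ = 2 := by
        rw [Finset.sum_add_distrib, single_abs_sum, single_abs_sum]; norm_num

/-- If the radius-1 balls (i.e. `ℓ¹`-radius-2 balls) around points of a
subgroup `L ≤ Aₖ` are pairwise disjoint, then in the induced incidence
structure on `Aₖ / L` any two distinct points lie on at most one common
line. -/
theorem stmt_16 (k : ℕ) (L : AddSubgroup (latticeA k))
    (hdisj : ∀ x ∈ L, ∀ y ∈ L, x ≠ y → ∀ z : latticeA k,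
      ¬(∑ i, |(x : Fin (k + 1) → ℤ) i - (z : Fin (k + 1) → ℤ) i| ≤ 2 ∧
        ∑ i, |(y : Fin (k + 1) → ℤ) i - (z : Fin (k + 1) → ℤ) i| ≤ 2)) :
    ∀ p₁ p₂ : latticeA k ⧸ L, p₁ ≠ p₂ → ∀ l₁ l₂ : latticeA k ⧸ L,
      Incid k L p₁ l₁ → Incid k L p₂ l₁ → Incid k L p₁ l₂ → Incid k L p₂ l₂ →
      l₁ = l₂ := by
  intro p₁ p₂ hne l₁ l₂ h₁ h₂ h₃ h₄
  obtain ⟨i1, h1⟩ := h₁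
  obtain ⟨j1, h2⟩ := h₂
  obtain ⟨i2, h3⟩ := h₃
  obtain ⟨j2, h4⟩ := h₄
  have hij2 : i2 ≠ j2 := by
    rintro rfl
    exact hne (sub_left_inj.mp (h3.trans h4.symm))
  by_cases hii : i1 = i2
  · subst hii
    have h5 : l₁ - l₂ = 0 := by
      have h5 : (p₁ - l₂) - (p₁ - l₁) = l₁ - l₂ := by abel
      rw [← h5, h1, h3, sub_self]
    exact sub_eq_zero.mp h5
  · exfalso
    set w : latticeA k := eij k i2 (Fin.last k) - eij k i1 (Fin.last k)
        - eij k j2 (Fin.last k) + eij k j1 (Fin.last k) with hw_def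
    have hwL : w ∈ L := by
      have h0 : (QuotientAddGroup.mk' L) w = 0 := by
        rw [hw_def]
        simp only [map_add, map_sub]
        rw [← h1, ← h2, ← h3, ← h4]
        abel
      rwa [QuotientAddGroup.mk'_apply, QuotientAddGroup.eq_zero_iff] at h0
    by_cases hw0 : w = 0
    · have hc : (Pi.single i2 1 : Fin (k + 1) → ℤ) i2 - (Pi.single i1 1 : Fin (k + 1) → ℤ) i2
          - (Pi.single j2 1 : Fin (k + 1) → ℤ) i2 + (Pi.single j1 1 : Fin (k + 1) → ℤ) i2 = 0 := by
        have h := congrFun (congrArg Subtype.val hw0) i2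
        simp only [hw_def, AddSubgroup.coe_add, AddSubgroup.coe_sub, eij,
          Pi.add_apply, Pi.sub_apply, Pi.zero_apply, ZeroMemClass.coe_zero] at h
        linear_combination h
      simp only [Pi.single_apply] at hc
      rw [if_pos trivial, if_neg (fun h : i2 = i1 => hii h.symm), if_neg hij2] at hc
      split_ifs at hc <;> omega
    · have hd := hdisj w hwL 0 (zero_mem L) hw0
        (eij k i2 (Fin.last k) - eij k i1 (Fin.last k))
      apply hd
      constructor
      · have hco : ∀ i, (w : Fin (k + 1) → ℤ) i -
            ((eij k i2 (Fin.last k) - eij k i1 (Fin.last k) : latticeA k) :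
              Fin (k + 1) → ℤ) i = (Pi.single j1 1 : Fin (k + 1) → ℤ) i - (Pi.single j2 1 : Fin (k + 1) → ℤ) i := by
          intro i
          simp only [hw_def, AddSubgroup.coe_add, AddSubgroup.coe_sub, eij,
            Pi.add_apply, Pi.sub_apply]
          ring
        rw [Finset.sum_congr rfl (fun i _ => by rw [hco i])]
        exact pair_bound k j1 j2
      · have hco : ∀ i, ((0 : latticeA k) : Fin (k + 1) → ℤ) i -
            ((eij k i2 (Fin.last k) - eij k i1 (Fin.last k) : latticeA k) :
              Fin (k + 1) → ℤ) i = (Pi.single i1 1 : Fin (k + 1) → ℤ) i - (Pi.single i2 1 : Fin (k + 1) → ℤ) i := by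
          intro i
          simp only [AddSubgroup.coe_sub, eij, Pi.sub_apply, ZeroMemClass.coe_zero,
            Pi.zero_apply]
          ring
        rw [Finset.sum_congr rfl (fun i _ => by rw [hco i])]
        exact pair_bound k i1 i2
end
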